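/- Let q be a prime power, γ a generator of F_{q^2}^×, a an integer with u = gcd(q+1, a) satisfying 2 ≤ u ≤ q, and n = (q^2-1)/gcd(q^2-1, a). Then the code C = { (Tr(γ^{a i} β))_{i=0}^{n-1} : β ∈ F_{q^2} } has exactly two nonzero weights: n(q+1-u)/(q+1), attained by (q^2-1)/u codewords, and n, attained by (q^2-1)(u-1)/u codewords. -/

import Mathlib

lemma card_mod_filter (s k r : ℕ) (hr : r < s) :
    ((Finset.range (s * k)).filter fun i => i % s = r).card = k := by
  have hs : 0 < s := lt_of_le_of_lt (Nat.zero_le r) hr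
  rw [Finset.card_filter]
  rw [Finset.range_eq_Ico]
  induction k with
  | zero => simp
  | succ k ih =>
      rw [Nat.mul_succ, ← Finset.sum_Ico_consecutive (fun i => if i % s = r then (1:ℕ) else 0) (Nat.zero_le (s*k)) (Nat.le_add_right _ s), ih]
      have : ∑ i ∈ Finset.Ico (s * k) (s * k + s), (if i % s = r then 1 else 0) = 1 := by
        have h1 : Finset.Ico (s * k) (s * k + s) = Finset.image (fun j => s * k + j) (Finset.range s) := by
          ext x
          simp only [Finset.mem_Ico, Finset.mem_image, Finset.mem_range]
          constructor
          · rintro ⟨h1, h2⟩; exact ⟨x - s * k, by omega, by omega⟩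
          · rintro ⟨j, hj, rfl⟩; omega
        rw [h1, Finset.sum_image (by intro x _ y _ h; simp only at h; omega)]
        have : ∀ j ∈ Finset.range s, (if (s * k + j) % s = r then 1 else 0) = if j = r then 1 else 0 := by
          intro j hj
          rw [Finset.mem_range] at hj
          congr 1
          rw [Nat.mul_add_mod, Nat.mod_eq_of_lt hj]
        rw [Finset.sum_congr rfl this, Finset.sum_ite_eq' (Finset.range s) r (fun _ => 1)]
        simp [Finset.mem_range.mpr hr]
      omega

lemma count_key (n m : ℕ) (hm : 0 < m) (a c : ℤ) (hmn : (m:ℤ) ∣ a * n) :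
    ((Finset.range n).filter fun i : ℕ => (m:ℤ) ∣ a * (i:ℤ) + c).card =
      if (Int.gcd a m : ℤ) ∣ c then n * Int.gcd a m / m else 0 := by
  set u : ℕ := Int.gcd a m with hu
  have hu0 : 0 < u := Int.gcd_pos_iff.mpr (Or.inr (by exact_mod_cast hm.ne'))
  have hua : (u:ℤ) ∣ a := Int.gcd_dvd_left a m
  have hum : (u:ℤ) ∣ (m:ℤ) := Int.gcd_dvd_right a m
  have humn : u ∣ m := by exact_mod_cast hum
  by_cases hc : (u:ℤ) ∣ c
  · rw [if_pos hc]
    set s : ℕ := m / u with hs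
    have hsm : u * s = m := Nat.mul_div_cancel' humn
    have hs0 : 0 < s := by
      rcases Nat.eq_zero_or_pos s with h | h
      · rw [h] at hsm; omega
      · exact h
    have hcop : Int.gcd (a / u) (s:ℤ) = 1 := by
      have h := Int.gcd_div_gcd_div_gcd (i := a) (j := (m:ℤ)) (by exact_mod_cast hu0)
      rw [← hu] at h
      rwa [show ((m:ℤ)/(u:ℤ)) = (s:ℤ) by rw [hs]; push_cast [Int.natCast_ediv]; rfl] at h
    have hcop' : IsCoprime (s:ℤ) (a / u) := by
      rw [Int.isCoprime_iff_gcd_eq_one, Int.gcd_comm]; exact hcop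
    have hau : (u:ℤ) * (a / u) = a := Int.mul_ediv_cancel' hua
    obtain ⟨e, he⟩ := hc
    have hbez : (u:ℤ) = a * Int.gcdA a m + m * Int.gcdB a m := Int.gcd_eq_gcd_ab a m
    set i₀ : ℤ := -(Int.gcdA a m * e) with hi₀
    have h₀ : (m:ℤ) ∣ a * i₀ + c := ⟨Int.gcdB a m * e, by rw [hi₀, he, show a * -(Int.gcdA a m * e) + (u:ℤ) * e = ((u:ℤ) - a * Int.gcdA a m) * e by ring, show ((u:ℤ) - a * Int.gcdA a m) = m * Int.gcdB a m by rw [hbez]; ring]; ring⟩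
    have hequiv : ∀ i : ℤ, ((m:ℤ) ∣ a * i + c ↔ (s:ℤ) ∣ (i - i₀)) := by
      intro i
      constructor
      · intro h
        have h2 : (m:ℤ) ∣ a * (i - i₀) := by
          have := dvd_sub h h₀; rwa [show a*i+c - (a*i₀+c) = a*(i-i₀) by ring] at this
        rw [← hsm] at h2; push_cast at h2
        rw [← hau, mul_assoc] at h2
        have h3 : (s:ℤ) ∣ (a/u) * (i - i₀) :=
          (mul_dvd_mul_iff_left (by exact_mod_cast hu0.ne' : (u:ℤ) ≠ 0)).mp h2
        exact hcop'.dvd_of_dvd_mul_left h3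
      · rintro ⟨j, hj⟩
        rw [show a * i + c = (a*i₀ + c) + a * (i - i₀) by ring]
        refine dvd_add h₀ ?_
        rw [hj, ← hau]
        exact ⟨(a/u) * j, by rw [← hsm]; push_cast; ring⟩
    set r : ℕ := (i₀ % (s:ℤ)).toNat with hr
    have h2 : (0:ℤ) ≤ i₀ % s := Int.emod_nonneg i₀ (by exact_mod_cast hs0.ne')
    have hrs : r < s := by
      have h1 := Int.emod_lt_of_pos i₀ (by exact_mod_cast hs0 : (0:ℤ) < s)
      omega
    have hcond : ∀ i : ℕ, ((m:ℤ) ∣ a * (i:ℤ) + c ↔ i % s = r) := by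
      intro i
      rw [hequiv i, ← Int.modEq_iff_dvd]
      unfold Int.ModEq
      constructor
      · intro h
        have : ((i % s : ℕ):ℤ) = (r:ℤ) := by
          push_cast
          rw [← h, hr, Int.toNat_of_nonneg h2]
        exact_mod_cast this
      · intro h
        rw [← Int.natCast_mod, h, hr, Int.toNat_of_nonneg h2]
    have hsn : s ∣ n := by
      have h2 : (m:ℤ) ∣ a * n := hmn
      rw [← hsm] at h2; push_cast at h2
      rw [← hau, mul_assoc] at h2
      have h3 : (s:ℤ) ∣ (a/u) * n :=
        (mul_dvd_mul_iff_left (by exact_mod_cast hu0.ne' : (u:ℤ) ≠ 0)).mp h2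
      exact_mod_cast hcop'.dvd_of_dvd_mul_left h3
    have hfe : ((Finset.range n).filter fun i : ℕ => (m:ℤ) ∣ a * (i:ℤ) + c)
        = ((Finset.range n).filter fun i : ℕ => i % s = r) := by
      apply Finset.filter_congr; intro i _; simp [hcond i]
    obtain ⟨k, hk⟩ := hsn
    have hd : n * u / m = k := by
      rw [hk, ← hsm, show s*k*u = (u*s)*k by ring]
      exact Nat.mul_div_cancel_left k (by positivity)
    rw [hfe, hd, hk, card_mod_filter s k r hrs]
  · rw [if_neg hc]
    rw [Finset.card_eq_zero, Finset.filter_eq_empty_iff]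
    intro i _ hdvd
    have h1 : (u:ℤ) ∣ a * i + c := hum.trans hdvd
    have h2 : (u:ℤ) ∣ a * i := hua.mul_right _
    exact hc (by have := dvd_sub h1 h2; simpa using this)

section
variable {q : ℕ} {F : Type*} [Field F] [Fintype F] [DecidableEq F] {K : Subfield F} [Fintype K]

example (k : K) (x : F) : k • x = (k : F) * x := rfl

lemma mem_iff_pow (hq : 2 ≤ q) (hF : Fintype.card F = q ^ 2) (hK : Fintype.card K = q) (y : F) :
    y ∈ K ↔ y ^ q = y := by
  constructor
  · intro h
    have h1 : (⟨y, h⟩ : K) ^ Fintype.card K = ⟨y, h⟩ := FiniteField.pow_card _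
    rw [hK] at h1
    have := congrArg (fun k : K => (k : F)) h1
    push_cast at this
    exact this
  · intro h
    classical
    set p : Polynomial F := Polynomial.X ^ q - Polynomial.X with hp
    have hmon : p.Monic := Polynomial.monic_X_pow_sub (by
      rw [Polynomial.degree_X]; exact_mod_cast hq)
    have hdeg : p.natDegree = q := by
      rw [hp]
      rw [Polynomial.natDegree_sub_eq_left_of_natDegree_lt]
      · exact Polynomial.natDegree_X_pow q
      · rw [Polynomial.natDegree_X_pow, Polynomial.natDegree_X]; omega
    set A : Finset F := Finset.univ.filter (fun x : F => x ^ q = x) with hA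
    set KF : Finset F := Finset.univ.image (fun k : K => (k : F)) with hKF
    have hsub : KF ⊆ A := by
      intro x hx
      rw [hKF, Finset.mem_image] at hx
      obtain ⟨k, _, rfl⟩ := hx
      rw [hA, Finset.mem_filter]
      refine ⟨Finset.mem_univ _, ?_⟩
      have h1 : k ^ Fintype.card K = k := FiniteField.pow_card _
      rw [hK] at h1
      have := congrArg (fun k : K => (k : F)) h1
      push_cast at this
      exact this
    have hcardKF : KF.card = q := by
      rw [hKF, Finset.card_image_of_injective _ Subtype.coe_injective, Finset.card_univ, hK]
    have hAsub : A ⊆ p.roots.toFinset := by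
      intro x hx
      rw [hA, Finset.mem_filter] at hx
      rw [Multiset.mem_toFinset, Polynomial.mem_roots (hmon.ne_zero)]
      simp [hp, sub_eq_zero, hx.2]
    have hcardA : A.card ≤ q := by
      calc A.card ≤ p.roots.toFinset.card := Finset.card_le_card hAsub
        _ ≤ Multiset.card p.roots := Multiset.toFinset_card_le _
        _ ≤ p.natDegree := Polynomial.card_roots' p
        _ = q := hdeg
    have heq : KF = A := Finset.eq_of_subset_of_card_le hsub (by omega)
    have hy : y ∈ A := by rw [hA, Finset.mem_filter]; exact ⟨Finset.mem_univ _, h⟩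
    rw [← heq, hKF, Finset.mem_image] at hy
    obtain ⟨k, _, rfl⟩ := hy
    exact k.2

lemma unit_pow_mem_iff (hq : 2 ≤ q) (hF : Fintype.card F = q ^ 2) (hK : Fintype.card K = q)
    (γ : Fˣ) (hγ : ∀ x : Fˣ, x ∈ Subgroup.zpowers γ) (s : ℤ) :
    ((γ ^ s : Fˣ) : F) ∈ K ↔ ((q:ℤ) + 1) ∣ s := by
  have hN : orderOf γ = q ^ 2 - 1 := by
    rw [orderOf_eq_card_of_forall_mem_zpowers hγ, Nat.card_eq_fintype_card, Fintype.card_units, hF]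
  rw [mem_iff_pow hq hF hK]
  have hcoe : ((γ ^ s : Fˣ) : F) ^ q = ((γ ^ (s * q) : Fˣ) : F) := by
    rw [zpow_mul, zpow_natCast]; push_cast; ring
  rw [hcoe]
  rw [show (((γ ^ (s*q) : Fˣ)) : F) = ((γ ^ s : Fˣ) : F) ↔ γ ^ (s*q) = γ ^ s from
    ⟨fun h => Units.ext h, fun h => congrArg _ h⟩]
  rw [show (γ ^ (s*q) = γ ^ s) ↔ γ ^ (s*q - s) = 1 by
    rw [zpow_sub]; constructor
    · intro h; rw [h]; simp
    · intro h; have := congrArg (· * γ ^ s) h; simpa [mul_assoc] using this]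
  rw [← orderOf_dvd_iff_zpow_eq_one, hN]
  have hcast : (((q^2 - 1 : ℕ)) : ℤ) = ((q:ℤ) + 1) * ((q:ℤ) - 1) := by
    have : (1:ℕ) ≤ q ^ 2 := by nlinarith
    push_cast [Nat.cast_sub this]
    ring
  rw [hcast, show s * (q:ℤ) - s = s * ((q:ℤ) - 1) by ring]
  rw [mul_comm s ((q:ℤ) - 1), mul_comm ((q:ℤ)+1) ((q:ℤ)-1)]
  have hq1 : ((q:ℤ) - 1) ≠ 0 := by
    have h2 : (2:ℤ) ≤ (q:ℤ) := by exact_mod_cast hq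
    omega
  exact mul_dvd_mul_iff_left hq1

end
set_option maxHeartbeats 1000000 in

lemma trace_zero_iff {q : ℕ} {F : Type*} [Field F] [Fintype F] [DecidableEq F]
    {K : Subfield F} [Fintype K]
    (hq : 2 ≤ q) (hF : Fintype.card F = q ^ 2) (hK : Fintype.card K = q) :
    ∃ z : Fˣ, ∀ x : Fˣ, Algebra.trace K F (x : F) = 0 ↔ ((x * z⁻¹ : Fˣ) : F) ∈ K := by
  classical
  have : Module.Finite K F := Module.Finite.of_finite
  have hsurj : Function.Surjective (Algebra.trace K F) := Algebra.trace_surjective K F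
  set T : Submodule K F := LinearMap.ker (Algebra.trace K F) with hT
  have hquot : Nat.card (F ⧸ T) = q := by
    have e := LinearMap.quotKerEquivOfSurjective _ hsurj
    rw [Nat.card_congr e.toEquiv, Nat.card_eq_fintype_card, hK]
  have hcardF : Nat.card F = q ^ 2 := by rw [Nat.card_eq_fintype_card, hF]
  have hcardT : Nat.card T = q := by
    have h := Submodule.card_eq_card_quotient_mul_card T
    rw [hcardF, hquot] at h
    have hq0 : 0 < q := by omega
    nlinarith [Nat.card_pos (α := T)]
  have : Fintype T := Fintype.ofFinite _
  have hcardT' : Fintype.card T = q := by rw [← Nat.card_eq_fintype_card, hcardT]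
  obtain ⟨z, hz⟩ := Fintype.exists_ne_of_one_lt_card (by omega : 1 < Fintype.card T) (0 : T)
  have hzF : (z : F) ≠ 0 := fun h => hz (Subtype.ext h)
  set zu : Fˣ := Units.mk0 (z : F) hzF with hzu
  have hker : ∀ k : K, Algebra.trace K F ((k : F) * (z : F)) = 0 := by
    intro k
    have h1 : ((k : F) * (z : F)) = k • (z : F) := rfl
    have hz0 : Algebra.trace K F (z : F) = 0 := z.2
    rw [h1, map_smul, hz0, smul_zero]
  have hmem : ∀ k : K, (k : F) * (z : F) ∈ T := fun k => LinearMap.mem_ker.mpr (hker k)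
  have hsurjT : ∀ x : F, Algebra.trace K F x = 0 → ∃ k : K, x = (k : F) * (z : F) := by
    intro x hx
    set φ : K → T := fun k => ⟨(k : F) * (z : F), hmem k⟩ with hφ
    have hinj : Function.Injective φ := by
      intro k₁ k₂ h
      rw [hφ, Subtype.mk_eq_mk] at h
      have := mul_right_cancel₀ hzF h
      exact_mod_cast Subtype.ext this
    have hbij : Function.Bijective φ :=
      (Fintype.bijective_iff_injective_and_card φ).mpr ⟨hinj, by rw [hK, hcardT']⟩
    obtain ⟨k, hk⟩ := hbij.2 ⟨x, LinearMap.mem_ker.mpr hx⟩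
    refine ⟨k, ?_⟩
    have := congrArg Subtype.val hk
    simpa [hφ] using this.symm
  refine ⟨zu, fun x => ?_⟩
  constructor
  · intro hx
    obtain ⟨k, hk⟩ := hsurjT (x : F) hx
    have h2 : ((x * zu⁻¹ : Fˣ) : F) = (k : F) := by
      rw [Units.val_mul, Units.val_inv_eq_inv_val, hzu, Units.val_mk0, hk]
      field_simp
    rw [h2]; exact k.2
  · intro hx
    have hxz : (x : F) = ((⟨_, hx⟩ : K) : F) * (z : F) := by
      show (x : F) = ((x * zu⁻¹ : Fˣ) : F) * (z : F)
      rw [Units.val_mul, Units.val_inv_eq_inv_val, hzu, Units.val_mk0]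
      field_simp
    rw [hxz]
    exact hker _

set_option maxHeartbeats 1000000 in
theorem stmt_11 (q : ℕ) (hq : IsPrimePow q)
    (F : Type*) [Field F] [Fintype F] [DecidableEq F] (hF : Fintype.card F = q ^ 2)
    (K : Subfield F) [Fintype K] (hK : Fintype.card K = q)
    (γ : Fˣ) (hγ : ∀ x : Fˣ, x ∈ Subgroup.zpowers γ)
    (a : ℤ) (u : ℕ) (hu : u = Int.gcd (q + 1 : ℕ) a) (hu2 : 2 ≤ u) (huq : u ≤ q)
    (n : ℕ) (hn : n = (q ^ 2 - 1) / Int.gcd (q ^ 2 - 1 : ℕ) a)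
    (c : F → Fin n → K)
    (hc : ∀ β i, c β i = Algebra.trace K F ((γ ^ (a * (i : ℕ)) : Fˣ) * β))
    (w : F → ℕ) (hw : ∀ β, w β = (Finset.univ.filter fun i : Fin n => c β i ≠ 0).card) :
    (∀ β : F, β ≠ 0 → w β = n * (q + 1 - u) / (q + 1) ∨ w β = n) ∧
    (Finset.univ.filter fun β : F => w β = n * (q + 1 - u) / (q + 1)).card
      = (q ^ 2 - 1) / u ∧
    (Finset.univ.filter fun β : F => w β = n).card = (q ^ 2 - 1) * (u - 1) / u := by
  classical
  have hq2 : 2 ≤ q := le_trans hu2 huq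
  set N : ℕ := q ^ 2 - 1 with hN
  have hNpos : 0 < N := by
    rw [hN]
    have h4 : 4 ≤ q ^ 2 := by nlinarith
    omega
  have hNcard : Fintype.card Fˣ = N := by rw [Fintype.card_units, hF]
  have hNfact : N = (q - 1) * (q + 1) := by
    have h := Nat.sq_sub_sq q 1
    simp only [one_pow] at h
    rw [hN, h, Nat.mul_comm]
  set d : ℕ := Int.gcd (N : ℤ) a with hd
  have hdN : d ∣ N := by exact_mod_cast (Int.gcd_dvd_left (N:ℤ) a : (d:ℤ) ∣ (N:ℤ))
  have hd0 : 0 < d := Nat.pos_of_dvd_of_pos hdN hNpos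
  have hnd : n * d = N := by rw [hn]; exact Nat.div_mul_cancel hdN
  have hn0 : 0 < n := by
    rcases Nat.eq_zero_or_pos n with h | h
    · rw [h] at hnd; omega
    · exact h
  have huq1 : u ∣ q + 1 := by
    rw [hu]
    exact_mod_cast (Int.gcd_dvd_left ((q+1:ℕ):ℤ) a : ((Int.gcd ((q+1:ℕ):ℤ) a : ℕ):ℤ) ∣ ((q+1:ℕ):ℤ))
  have huN : u ∣ N := huq1.trans ⟨q - 1, by rw [hNfact]; ring⟩
  have hu0 : 0 < u := by omega
  have hdu : d ∣ (q - 1) * u := by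
    have h0 : ((N:ℕ):ℤ) = ((q-1:ℕ):ℤ) * ((q+1:ℕ):ℤ) := by rw [hNfact]; push_cast; ring
    have h1 : (d:ℤ) ∣ ((q-1:ℕ):ℤ) * ((q+1:ℕ):ℤ) := by
      have h := hdN
      rw [hNfact] at h
      exact_mod_cast h
    have h2 : (d:ℤ) ∣ ((q-1:ℕ):ℤ) * a :=
      Dvd.dvd.mul_left (Int.gcd_dvd_right (N:ℤ) a : (d:ℤ) ∣ a) _
    have h3 := Int.dvd_coe_gcd h1 h2
    rw [Int.gcd_mul_left] at h3
    simp only [Int.natAbs_natCast] at h3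
    have h4 : (d:ℤ) ∣ (((q-1) * u : ℕ) : ℤ) := by rw [hu]; exact_mod_cast h3
    exact_mod_cast h4
  set e : ℕ := (q - 1) * u / d with he
  have hed : e * d = (q - 1) * u := Nat.div_mul_cancel hdu
  have he0 : 0 < e := by
    rcases Nat.eq_zero_or_pos e with h | h
    · rw [h, Nat.zero_mul] at hed
      rcases Nat.mul_eq_zero.mp hed.symm with h' | h' <;> omega
    · exact h
  have hnue : n * u = (q + 1) * e := by
    have h1 : (n * u) * d = ((q + 1) * e) * d := by
      rw [show n * u * d = (n * d) * u by ring, hnd, hNfact,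
        show (q+1) * e * d = (q+1) * (e * d) by ring, hed]
      ring
    exact Nat.eq_of_mul_eq_mul_right hd0 h1
  have hen : e < n := by
    have h1 : (q + 1) * e < (q + 1) * n := by
      rw [← hnue]
      calc n * u ≤ n * q := Nat.mul_le_mul_left n huq
        _ < n * (q + 1) := by nlinarith
        _ = (q + 1) * n := Nat.mul_comm _ _
    exact Nat.lt_of_mul_lt_mul_left h1
  have hlow : n * (q + 1 - u) / (q + 1) = n - e := by
    have h1 : n * (q + 1 - u) = (q + 1) * (n - e) := by
      have ha : n * (q + 1 - u) + n * u = n * (q + 1) := by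
        rw [← Nat.mul_add]; congr 1; omega
      have hb : (q + 1) * (n - e) + (q + 1) * e = (q + 1) * n := by
        rw [← Nat.mul_add]; congr 1; omega
      have hc2 : n * (q + 1 - u) + n * u = (q + 1) * (n - e) + (q + 1) * e := by
        rw [ha, hb]; ring
      rw [hnue] at hc2
      exact Nat.add_right_cancel hc2
    rw [h1, Nat.mul_div_cancel_left _ (by omega : 0 < q + 1)]
  obtain ⟨zu, hz⟩ := trace_zero_iff hq2 hF hK
  obtain ⟨t, ht⟩ := Subgroup.mem_zpowers_iff.mp (hγ zu)
  have htr : ∀ s : ℤ, (Algebra.trace K F ((γ ^ s : Fˣ) : F) = 0 ↔ ((q + 1 : ℕ) : ℤ) ∣ (s - t)) := by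
    intro s
    rw [hz (γ ^ s), ← ht, ← zpow_neg, ← zpow_add, show s + -t = s - t by ring,
      unit_pow_mem_iff hq2 hF hK γ hγ (s - t),
      show ((q:ℤ) + 1) = ((q + 1 : ℕ) : ℤ) by push_cast; ring]
  have hdvd_an : ((q + 1 : ℕ) : ℤ) ∣ a * n := by
    obtain ⟨a', ha'⟩ := (Int.gcd_dvd_right (N:ℤ) a : (d:ℤ) ∣ a)
    refine ⟨a' * ((q - 1 : ℕ) : ℤ), ?_⟩
    rw [ha']
    have hnd' : ((N:ℕ):ℤ) = ((n:ℕ):ℤ) * (d:ℤ) := by exact_mod_cast congrArg (Nat.cast : ℕ → ℤ) hnd.symm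
    have h0 : ((q+1:ℕ):ℤ) * ((q-1:ℕ):ℤ) = (N:ℤ) := by rw [hNfact]; push_cast; ring
    calc (d:ℤ) * a' * (n:ℤ) = a' * ((n:ℤ) * (d:ℤ)) := by ring
      _ = a' * (N:ℤ) := by rw [← hnd']
      _ = ((q+1:ℕ):ℤ) * (a' * ((q-1:ℕ):ℤ)) := by rw [← h0]; ring
  have hgcd_an : Int.gcd a ((q + 1 : ℕ) : ℤ) = u := by rw [hu, Int.gcd_comm]
  have hmain : ∀ b : ℤ, w ((γ ^ b : Fˣ) : F) = if (u:ℤ) ∣ (b - t) then n - e else n := by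
    intro b
    have hzero : (Finset.univ.filter fun i : Fin n => c ((γ ^ b : Fˣ) : F) i = 0).card
        = if (u:ℤ) ∣ (b - t) then e else 0 := by
      have hcond : ∀ i : Fin n,
          (c ((γ ^ b : Fˣ) : F) i = 0 ↔ ((q + 1 : ℕ) : ℤ) ∣ a * ((i:ℕ):ℤ) + (b - t)) := by
        intro i
        rw [hc]
        rw [← Units.val_mul, ← zpow_add, htr,
          show a * ((i:ℕ):ℤ) + b - t = a * ((i:ℕ):ℤ) + (b - t) by ring]
      have h1 : (Finset.univ.filter fun i : Fin n => c ((γ ^ b : Fˣ) : F) i = 0)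
          = (Finset.univ.filter fun i : Fin n => ((q + 1 : ℕ) : ℤ) ∣ a * ((i:ℕ):ℤ) + (b - t)) := by
        apply Finset.filter_congr
        intro i _
        simp only [hcond i]
      rw [h1, Finset.card_filter]
      rw [Fin.sum_univ_eq_sum_range
        (fun j : ℕ => if ((q + 1 : ℕ) : ℤ) ∣ a * (j:ℤ) + (b - t) then 1 else 0) n]
      rw [← Finset.card_filter]
      rw [count_key n (q + 1) (by omega) a (b - t) hdvd_an]
      rw [hgcd_an]
      have hval : n * u / (q + 1) = e := by
        rw [hnue, Nat.mul_div_cancel_left _ (by omega : 0 < q + 1)]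
      rw [hval]
    rw [hw]
    have hsplit := Finset.card_filter_add_card_filter_not
      (s := (Finset.univ : Finset (Fin n))) (p := fun i : Fin n => c ((γ ^ b : Fˣ) : F) i = 0)
    rw [Finset.card_univ, Fintype.card_fin] at hsplit
    have hne : (Finset.univ.filter fun i : Fin n => c ((γ ^ b : Fˣ) : F) i ≠ 0)
        = (Finset.univ.filter fun i : Fin n => ¬ (c ((γ ^ b : Fˣ) : F) i = 0)) := rfl
    rw [hne]
    split_ifs at hzero ⊢ with hcase <;> omega
  have hw0 : w 0 = 0 := by
    rw [hw, Finset.card_eq_zero, Finset.filter_eq_empty_iff]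
    intro i _
    simp [hc]
  have hordγ : orderOf γ = N := by
    rw [orderOf_eq_card_of_forall_mem_zpowers hγ, Nat.card_eq_fintype_card, hNcard]
  have hcount : ∀ (P : F → Prop) (inst : DecidablePred P), ¬ P 0 →
      (Finset.univ.filter P).card
        = ((Finset.range N).filter fun j : ℕ => P ((γ ^ ((j:ℕ):ℤ) : Fˣ) : F)).card := by
    intro P inst hP0
    rw [eq_comm]
    apply Finset.card_bij (fun j _ => ((γ ^ ((j:ℕ):ℤ) : Fˣ) : F))
    · intro j hj
      rw [Finset.mem_filter] at hj ⊢
      exact ⟨Finset.mem_univ _, hj.2⟩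
    · intro j₁ h₁ j₂ h₂ hEq
      rw [Finset.mem_filter, Finset.mem_range] at h₁ h₂
      have hu2' : γ ^ ((j₁:ℕ):ℤ) = γ ^ ((j₂:ℕ):ℤ) := Units.ext hEq
      rw [zpow_natCast, zpow_natCast] at hu2'
      exact pow_injOn_Iio_orderOf (by rw [hordγ]; exact h₁.1) (by rw [hordγ]; exact h₂.1) hu2'
    · intro β hβ
      rw [Finset.mem_filter] at hβ
      have hβ0 : β ≠ 0 := fun h => hP0 (h ▸ hβ.2)
      obtain ⟨b, hb⟩ := Subgroup.mem_zpowers_iff.mp (hγ (Units.mk0 β hβ0))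
      have hNz : ((N:ℕ):ℤ) ≠ 0 := by exact_mod_cast hNpos.ne'
      have hmod1 : (0:ℤ) ≤ b % (N:ℤ) := Int.emod_nonneg b hNz
      have hmod2 : b % (N:ℤ) < (N:ℤ) := Int.emod_lt_of_pos b (by exact_mod_cast hNpos)
      have hpow : γ ^ ((((b % (N:ℤ)).toNat : ℕ)):ℤ) = Units.mk0 β hβ0 := by
        rw [Int.toNat_of_nonneg hmod1, ← hordγ, zpow_mod_orderOf, hb]
      refine ⟨(b % (N:ℤ)).toNat, ?_, ?_⟩
      · rw [Finset.mem_filter, Finset.mem_range]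
        refine ⟨by omega, ?_⟩
        rw [hpow]
        simpa using hβ.2
      · rw [hpow]; simp
  have hrangelow : ((Finset.range N).filter fun j : ℕ => (u:ℤ) ∣ ((j:ℕ):ℤ) - t).card = N / u := by
    have h1 : ((Finset.range N).filter fun j : ℕ => (u:ℤ) ∣ ((j:ℕ):ℤ) - t)
        = ((Finset.range N).filter fun j : ℕ => (u:ℤ) ∣ (1:ℤ) * ((j:ℕ):ℤ) + (-t)) := by
      apply Finset.filter_congr
      intro j _
      rw [show (1:ℤ) * ((j:ℕ):ℤ) + (-t) = ((j:ℕ):ℤ) - t by ring]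
    rw [h1, count_key N u hu0 1 (-t) (by rw [one_mul]; exact_mod_cast huN)]
    rw [if_pos (by simp)]
    simp
  have hpart1 : ∀ β : F, β ≠ 0 → w β = n * (q + 1 - u) / (q + 1) ∨ w β = n := by
    intro β hβ0
    obtain ⟨b, hb⟩ := Subgroup.mem_zpowers_iff.mp (hγ (Units.mk0 β hβ0))
    have hβeq : ((γ ^ b : Fˣ) : F) = β := by rw [hb]; simp
    have hm := hmain b
    rw [hβeq] at hm
    rw [hlow]
    by_cases hcase : (u:ℤ) ∣ (b - t)
    · left; rw [hm, if_pos hcase]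
    · right; rw [hm, if_neg hcase]
  have hpartlow : (Finset.univ.filter fun β : F => w β = n * (q + 1 - u) / (q + 1)).card
      = N / u := by
    rw [hlow]
    have hstep : (Finset.univ.filter fun β : F => w β = n - e).card
        = ((Finset.range N).filter fun j : ℕ => w ((γ ^ ((j:ℕ):ℤ) : Fˣ) : F) = n - e).card := by
      convert hcount (fun β => w β = n - e) (by infer_instance)
        (by show ¬ (w 0 = n - e); rw [hw0]; omega) using 2
    rw [hstep]
    have h1 : ((Finset.range N).filter fun j : ℕ => w ((γ ^ ((j:ℕ):ℤ) : Fˣ) : F) = n - e)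
        = ((Finset.range N).filter fun j : ℕ => (u:ℤ) ∣ ((j:ℕ):ℤ) - t) := by
      apply Finset.filter_congr
      intro j _
      rw [hmain ((j:ℕ):ℤ)]
      split_ifs with hcase
      · simp [hcase]
      · simp only [hcase, iff_false]
        omega
    rw [h1, hrangelow]
  have hparthigh : (Finset.univ.filter fun β : F => w β = n).card = N - N / u := by
    have hstep : (Finset.univ.filter fun β : F => w β = n).card
        = ((Finset.range N).filter fun j : ℕ => w ((γ ^ ((j:ℕ):ℤ) : Fˣ) : F) = n).card := by
      convert hcount (fun β => w β = n) (by infer_instance)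
        (by show ¬ (w 0 = n); rw [hw0]; omega) using 2
    rw [hstep]
    have h1 : ((Finset.range N).filter fun j : ℕ => w ((γ ^ ((j:ℕ):ℤ) : Fˣ) : F) = n)
        = ((Finset.range N).filter fun j : ℕ => ¬ ((u:ℤ) ∣ ((j:ℕ):ℤ) - t)) := by
      apply Finset.filter_congr
      intro j _
      rw [hmain ((j:ℕ):ℤ)]
      split_ifs with hcase
      · simp only [hcase, not_true, iff_false]
        omega
      · simp [hcase]
    rw [h1]
    have h2 := Finset.card_filter_add_card_filter_not
      (s := Finset.range N) (p := fun j : ℕ => (u:ℤ) ∣ ((j:ℕ):ℤ) - t)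
    rw [Finset.card_range, hrangelow] at h2
    omega
  refine ⟨hpart1, by rw [hpartlow], ?_⟩
  rw [hparthigh]
  obtain ⟨k, hk⟩ := huN
  rw [hk, Nat.mul_div_cancel_left _ hu0,
    show u * k * (u - 1) = u * (k * (u - 1)) by ring, Nat.mul_div_cancel_left _ hu0,
    mul_comm k (u - 1), tsub_mul, one_mul]
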